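/- For integers n ≥ 1 and 1 ≤ i ≤ j ≤ n, ((1 + 1/n)^{i−1} − 1) · ((1 + 2/n)^{j−i} − (1 + 1/n)^{j−i}) · (1 + 2/n)^{n−j+1} ≤ (e^β − 1)·e^{γ−β}·(e^{γ−β} − 1)·e^{2(1−γ)}·(1 + 2/n), where β = i/n and γ = j/n. -/

import Mathlib

open Real

theorem stmt17 (n i j : ℕ) (hn : 1 ≤ n) (hi : 1 ≤ i) (hij : i ≤ j) (hjn : j ≤ n) :
    (((1 : ℝ) + 1 / n) ^ (i - 1) - 1) *
        (((1 : ℝ) + 2 / n) ^ (j - i) - ((1 : ℝ) + 1 / n) ^ (j - i)) *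
        ((1 : ℝ) + 2 / n) ^ (n - j + 1)
      ≤ (Real.exp ((i : ℝ) / n) - 1) * Real.exp ((j : ℝ) / n - (i : ℝ) / n) *
        (Real.exp ((j : ℝ) / n - (i : ℝ) / n) - 1) *
        Real.exp (2 * (1 - (j : ℝ) / n)) * (1 + 2 / n) := by
  have hn0 : (0:ℝ) < n := by exact_mod_cast hn
  have h1n : (0:ℝ) ≤ 1/n := by positivity
  have h2n : (0:ℝ) ≤ 2/n := by positivity
  set a : ℝ := 1 + 1/n with ha
  set b : ℝ := 1 + 2/n with hb
  have ha1 : (1:ℝ) ≤ a := by rw [ha]; linarith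
  have hb1 : (1:ℝ) ≤ b := by rw [hb]; linarith
  have ha0 : (0:ℝ) ≤ a := by linarith
  have hb0 : (0:ℝ) ≤ b := by linarith
  -- pow bounds via exp
  have hea : ∀ m : ℕ, a ^ m ≤ Real.exp ((m : ℝ) / n) := by
    intro m
    have h1 : a ≤ Real.exp (1/n) := by
      have := Real.add_one_le_exp (1/n); linarith
    calc a ^ m ≤ (Real.exp (1/n)) ^ m := pow_le_pow_left₀ ha0 h1 m
      _ = Real.exp ((m : ℝ) / n) := by
          rw [← Real.exp_nat_mul]; ring_nf
  have heb : ∀ m : ℕ, b ^ m ≤ Real.exp (2 * (m : ℝ) / n) := by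
    intro m
    have h1 : b ≤ Real.exp (2/n) := by
      have := Real.add_one_le_exp (2/n); linarith
    calc b ^ m ≤ (Real.exp (2/n)) ^ m := pow_le_pow_left₀ hb0 h1 m
      _ = Real.exp (2 * (m : ℝ) / n) := by
          rw [← Real.exp_nat_mul]; ring_nf
  have hba : b ≤ a ^ 2 := by
    rw [ha, hb]; ring_nf; nlinarith [sq_nonneg ((n:ℝ)⁻¹)]
  -- casts
  have hci : ((i - 1 : ℕ) : ℝ) = (i : ℝ) - 1 := by
    push_cast [Nat.cast_sub hi]; ring
  have hcj : ((j - i : ℕ) : ℝ) = (j : ℝ) - i := by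
    push_cast [Nat.cast_sub hij]; ring
  have hcn : ((n - j : ℕ) : ℝ) = (n : ℝ) - j := by
    push_cast [Nat.cast_sub hjn]; ring
  set E1 := Real.exp ((i : ℝ) / n)
  set E := Real.exp ((j : ℝ) / n - (i : ℝ) / n)
  set E3 := Real.exp (2 * (1 - (j : ℝ) / n))
  have hE1 : a ^ (i - 1) ≤ E1 := by
    refine (hea _).trans ?_
    apply Real.exp_le_exp.mpr
    rw [hci]
    have : (0:ℝ) ≤ 1/n := h1n
    gcongr
    linarith
  have hE : a ^ (j - i) ≤ E := by
    refine (hea _).trans ?_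
    apply Real.exp_le_exp.mpr
    rw [hcj]; ring_nf; rfl
  have hE3 : b ^ (n - j) ≤ E3 := by
    refine (heb _).trans ?_
    apply Real.exp_le_exp.mpr
    rw [hcn]
    field_simp; exact le_rfl
  have hX2one : (1:ℝ) ≤ a ^ (j - i) := one_le_pow₀ ha1
  have hX1one : (1:ℝ) ≤ a ^ (i - 1) := one_le_pow₀ ha1
  have hX4 : (0:ℝ) ≤ b ^ (n - j) := by positivity
  have hEone : (1:ℝ) ≤ E := le_trans hX2one hE
  have h2 : b ^ (j - i) - a ^ (j - i) ≤ E * (E - 1) := by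
    have hb2 : b ^ (j - i) ≤ (a ^ (j - i)) ^ 2 := by
      calc b ^ (j - i) ≤ (a ^ 2) ^ (j - i) := pow_le_pow_left₀ hb0 hba _
        _ = (a ^ (j - i)) ^ 2 := by rw [← pow_mul, ← pow_mul, Nat.mul_comm]
    nlinarith [hE, hX2one, hEone]
  have h2nonneg : (0:ℝ) ≤ b ^ (j - i) - a ^ (j - i) := by
    have h12 : (2:ℝ)/n = 1/n + 1/n := by ring
    have : a ^ (j - i) ≤ b ^ (j - i) := pow_le_pow_left₀ ha0 (by rw [ha, hb]; linarith) _
    linarith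
  have hE3b : b ^ (n - j + 1) = b ^ (n - j) * b := pow_succ b _
  rw [hE3b]
  calc (a ^ (i - 1) - 1) * (b ^ (j - i) - a ^ (j - i)) * (b ^ (n - j) * b)
      ≤ (E1 - 1) * (E * (E - 1)) * (E3 * b) := by
        apply mul_le_mul
        · apply mul_le_mul (by linarith) h2 h2nonneg (by linarith [hX1one, hE1])
        · exact mul_le_mul_of_nonneg_right hE3 (by linarith)
        · positivity
        · nlinarith [hX1one, hE1, h2nonneg, hEone, hE, hX2one]
    _ = (E1 - 1) * E * (E - 1) * E3 * b := by ring
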